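/- If A = A1 ∪ A2 is a separable γ-set of a finite simple graph G, with A1, A2 nonempty disjoint sets such that A1 dominates V(G) − A, then there is no edge of G with one endpoint in A1 and the other in A2. -/

import Mathlib

open SimpleGraph

variable {V : Type*}

/-- `D` is a dominating set of `G`: every vertex is in `D` or adjacent to a vertex of `D`. -/
def IsDomSet (G : SimpleGraph V) (D : Set V) : Prop :=
  ∀ v : V, ∃ d ∈ D, d = v ∨ G.Adj d v

/-- The domination number of `G`: minimum cardinality of a dominating set. -/
noncomputable def domNum (G : SimpleGraph V) : ℕ :=
  sInf {n | ∃ D : Set V, IsDomSet G D ∧ D.ncard = n}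

/-- The prism `πG` of `G`: two disjoint copies of `G` together with the matching
`{u (π u) : u ∈ V(G)}`, the second copy playing the role of `G'`. -/
def prism (G : SimpleGraph V) (π : Equiv.Perm V) : SimpleGraph (V ⊕ V) where
  Adj a b :=
    match a, b with
    | Sum.inl u, Sum.inl v => G.Adj u v
    | Sum.inr u, Sum.inr v => G.Adj u v
    | Sum.inl u, Sum.inr v => π u = v
    | Sum.inr u, Sum.inl v => π v = u
  symm := ⟨by
    rintro (u | u) (v | v) h
    · exact G.symm.symm _ _ h
    · exact h
    · exact h
    · exact G.symm.symm _ _ h⟩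
  loopless := ⟨by
    rintro (u | u) h
    · exact G.loopless.irrefl u h
    · exact G.loopless.irrefl u h⟩

/-- The closed neighborhood `N[v]` of a vertex. -/
def closedNbhd (G : SimpleGraph V) (v : V) : Set V :=
  insert v (G.neighborSet v)

/-- `x` is a `C₃`-free vertex: non-isolated and belonging to no triangle of `G`. -/
def C3Free (G : SimpleGraph V) (x : V) : Prop :=
  (∃ y, G.Adj x y) ∧ ∀ u v : V, G.Adj x u → G.Adj x v → ¬ G.Adj u v

/-- `A = A1 ∪ A2` is a separable γ-set of `G` (an `A1`-γ-set): `A1, A2` are nonempty,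
disjoint, `A` is a γ-set, and `A1` dominates `V(G) - A`. -/
def SepGammaSet (G : SimpleGraph V) (A1 A2 : Set V) : Prop :=
  A1.Nonempty ∧ A2.Nonempty ∧ Disjoint A1 A2 ∧
  IsDomSet G (A1 ∪ A2) ∧ (A1 ∪ A2).ncard = domNum G ∧
  ∀ v ∉ A1 ∪ A2, ∃ u ∈ A1, G.Adj u v

/-- The separable γ-set `A = A1 ∪ A2` is effective under `π`: `π(A)` is a γ-set of the
copy `G'` of `G` (identified with `G`) whose dominating part is `B2' = π(A2)`,
i.e. `π(A2)` dominates `V(G') - π(A)`. -/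
def Effective (G : SimpleGraph V) (π : Equiv.Perm V) (A1 A2 : Set V) : Prop :=
  IsDomSet G (⇑π '' (A1 ∪ A2)) ∧ (⇑π '' (A1 ∪ A2)).ncard = domNum G ∧
  ∀ v ∉ ⇑π '' (A1 ∪ A2), ∃ u ∈ ⇑π '' A2, G.Adj u v

/-- The star `K_{1,m}` on `Fin (m+1)`, with center `0` adjacent to the `m` leaves. -/
def starGraph (m : ℕ) : SimpleGraph (Fin (m + 1)) where
  Adj a b := (a = 0 ∧ b ≠ 0) ∨ (b = 0 ∧ a ≠ 0)
  symm := ⟨fun a b h => Or.symm h⟩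
  loopless := ⟨fun a h => by rcases h with ⟨h1, h2⟩ | ⟨h1, h2⟩ <;> exact h2 h1⟩

/-- in a separable γ-set `A = A1 ∪ A2`, there is no edge between `A1` and `A2`. -/
theorem sep_gamma_set_no_edge [Fintype V] (G : SimpleGraph V) (A1 A2 : Set V)
    (h : SepGammaSet G A1 A2) :
    ∀ u ∈ A1, ∀ v ∈ A2, ¬ G.Adj u v := by
  rintro u hu v hv hadj
  obtain ⟨hA1, hA2, hdisj, hdom, hcard, hsep⟩ := h
  have hne : u ≠ v := fun e => Set.disjoint_left.mp hdisj hu (e ▸ hv)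
  set A := A1 ∪ A2 with hA
  have hdom' : IsDomSet G (A \ {v}) := by
    intro w
    by_cases hw : w = v
    · exact ⟨u, ⟨Or.inl hu, by simp [hne]⟩, Or.inr (hw ▸ hadj)⟩
    · obtain ⟨d, hd, hdw⟩ := hdom w
      by_cases hdv : d = v
      · by_cases hwA : w ∈ A
        · exact ⟨w, ⟨hwA, by simp [hw]⟩, Or.inl rfl⟩
        · obtain ⟨x, hx, hxw⟩ := hsep w hwA
          refine ⟨x, ⟨Or.inl hx, ?_⟩, Or.inr hxw⟩
          simp only [Set.mem_singleton_iff]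
          intro hxv
          exact Set.disjoint_left.mp hdisj hx (hxv ▸ hv)
      · exact ⟨d, ⟨hd, by simp [hdv]⟩, hdw⟩
  have hvA : v ∈ A := Or.inr hv
  have hlt : (A \ {v}).ncard < A.ncard :=
    Set.ncard_diff_singleton_lt_of_mem hvA (Set.toFinite A)
  have hle : domNum G ≤ (A \ {v}).ncard := Nat.sInf_le ⟨A \ {v}, hdom', rfl⟩
  omega
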